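/- Let a, b > 0 be real numbers and define s(ξ) = Γ(a + iξ)/Γ(b + iξ) for ξ ∈ ℝ. Then s is differentiable on ℝ, the series Σ_{m=0}^{∞} (a − b)/((m + a + iξ)(m + b + iξ)) converges absolutely for every ξ ∈ ℝ, and s′(ξ) = s(ξ) · i · Σ_{m=0}^{∞} (a − b)/((m + a + iξ)(m + b + iξ)) for every ξ ∈ ℝ. -/

import Mathlib

open Filter Topology Set Complex

namespace GammaRatioAux




/-- tail summability helper -/
lemma summable_sq {C : ℝ} (hC : 0 < C) (K : ℝ) :
    Summable (fun m : ℕ => K / ((C * (m + 1)) * (C * (m + 1)))) := by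
  have h0 : Summable (fun m : ℕ => (1 : ℝ) / (m : ℝ) ^ 2) :=
    (Real.summable_one_div_nat_pow (p := 2)).mpr one_lt_two
  have h1 : Summable (fun m : ℕ => (1 : ℝ) / ((m : ℝ) + 1) ^ 2) := by
    have := (summable_nat_add_iff (f := fun m : ℕ => (1 : ℝ) / (m : ℝ) ^ 2) 1).mpr h0
    simpa using this
  have h2 := h1.mul_left (K / (C * C))
  refine h2.congr fun m => ?_
  have hm : ((m : ℝ) + 1) ≠ 0 := by positivity
  have hC' : C ≠ 0 := hC.ne'
  field_simp

lemma norm_nat_add_lower {w : ℂ} {ε : ℝ} (hε : 0 < ε) (hw : ε ≤ w.re) (m : ℕ) :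
    min ε 1 * (m + 1) ≤ ‖(m : ℂ) + w‖ := by
  have h1 : ((m : ℂ) + w).re ≤ ‖(m : ℂ) + w‖ := Complex.re_le_norm _
  have h2 : ((m : ℂ) + w).re = (m : ℝ) + w.re := by simp
  have hm : (0 : ℝ) ≤ (m : ℝ) := Nat.cast_nonneg m
  have : min ε 1 * (m + 1) ≤ (m : ℝ) + ε := by
    have hle1 : min ε 1 ≤ 1 := min_le_right _ _
    have hle2 : min ε 1 ≤ ε := min_le_left _ _
    nlinarith
  calc min ε 1 * (m + 1) ≤ (m : ℝ) + ε := this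
    _ ≤ (m : ℝ) + w.re := by linarith
    _ ≤ ‖(m : ℂ) + w‖ := by rw [← h2]; exact h1

lemma summable_norm_term {w₁ w₂ : ℂ} {ε : ℝ} (hε : 0 < ε) (h1 : ε ≤ w₁.re) (h2 : ε ≤ w₂.re) :
    Summable (fun m : ℕ => ‖(w₁ - w₂) / (((m : ℂ) + w₁) * ((m : ℂ) + w₂))‖) := by
  have hC : 0 < min ε 1 := lt_min hε one_pos
  refine Summable.of_nonneg_of_le (fun m => norm_nonneg _)
    (fun m => ?_) (summable_sq hC ‖w₁ - w₂‖)
  rw [norm_div, norm_mul]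
  have hm1 := norm_nat_add_lower hε h1 m
  have hm2 := norm_nat_add_lower hε h2 m
  have hp : 0 < min ε 1 * (m + 1) := by positivity
  gcongr




noncomputable def psiR (x : ℝ) : ℝ := deriv Real.Gamma x / Real.Gamma x

lemma gamma_diff {y : ℝ} (hy : 0 < y) : DifferentiableAt ℝ Real.Gamma y :=
  Real.differentiableAt_Gamma fun m => ne_of_gt (by have := Nat.cast_nonneg (α := ℝ) m; linarith)

lemma gamma_pos {y : ℝ} (hy : 0 < y) : 0 < Real.Gamma y := Real.Gamma_pos_of_pos hy

lemma psiR_rec {y : ℝ} (hy : 0 < y) : psiR (y + 1) = psiR y + 1 / y := by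
  have hΓ := gamma_pos hy
  have hd : deriv Real.Gamma (y + 1) = Real.Gamma y + y * deriv Real.Gamma y := by
    have h1 : deriv (fun x => Real.Gamma (x + 1)) y = deriv Real.Gamma (y + 1) :=
      deriv_comp_add_const _ _ _
    have h2 : HasDerivAt (fun x => x * Real.Gamma x)
        (1 * Real.Gamma y + y * deriv Real.Gamma y) y :=
      (hasDerivAt_id y).mul (gamma_diff hy).hasDerivAt
    have h3 : deriv (fun x => Real.Gamma (x + 1)) y
        = deriv (fun x => x * Real.Gamma x) y := by
      apply EventuallyEq.deriv_eq
      filter_upwards [eventually_gt_nhds hy] with x hx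
      exact Real.Gamma_add_one hx.ne'
    rw [← h1, h3, h2.deriv, one_mul]
  have hΓ1 : Real.Gamma (y + 1) = y * Real.Gamma y := Real.Gamma_add_one hy.ne'
  rw [psiR, psiR, hd, hΓ1]
  field_simp
  ring

/-- psiR equals the derivative of `log ∘ Gamma` at positive points. -/
lemma psiR_eq_deriv_log {y : ℝ} (hy : 0 < y) :
    psiR y = deriv (Real.log ∘ Real.Gamma) y := by
  have h : HasDerivAt (Real.log ∘ Real.Gamma) (deriv Real.Gamma y / Real.Gamma y) y :=
    (gamma_diff hy).hasDerivAt.log (gamma_pos hy).ne'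
  rw [psiR, h.deriv]

lemma psiR_mono {u v : ℝ} (hu : 0 < u) (huv : u ≤ v) : psiR u ≤ psiR v := by
  have hv : 0 < v := lt_of_lt_of_le hu huv
  rw [psiR_eq_deriv_log hu, psiR_eq_deriv_log hv]
  have hmono := Real.convexOn_log_Gamma.monotoneOn_deriv
    (fun x hx => (gamma_diff hx).log (gamma_pos hx).ne')
  have := hmono (mem_Ioi.mpr hu) (mem_Ioi.mpr hv) huv
  simpa [Function.comp] using this

lemma psiR_add_nat_le {y : ℝ} (hy : 0 < y) (k : ℕ) :
    psiR (y + k) ≤ psiR y + k / y := by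
  induction k with
  | zero => simp
  | succ k ih =>
    have hyk : 0 < y + k := by positivity
    have h1 : psiR (y + (k + 1 : ℕ)) = psiR (y + k) + 1 / (y + k) := by
      have := psiR_rec hyk
      rw [← this]
      push_cast
      ring_nf
    rw [h1]
    have h2 : 1 / (y + k) ≤ 1 / y := by
      apply one_div_le_one_div_of_le hy
      linarith [Nat.cast_nonneg (α := ℝ) k]
    have : ((k : ℝ) + 1) / y = k / y + 1 / y := by ring
    push_cast
    linarith





lemma real_denom_lower {u : ℝ} (hu : 0 < u) (m : ℕ) :
    min u 1 * (m + 1) ≤ (m : ℝ) + u := by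
  have h1 : min u 1 ≤ 1 := min_le_right _ _
  have h2 : min u 1 ≤ u := min_le_left _ _
  have hm : (0 : ℝ) ≤ (m : ℝ) := Nat.cast_nonneg m
  nlinarith

lemma real_summable {u v : ℝ} (hu : 0 < u) (hv : 0 < v) :
    Summable (fun m : ℕ => (u - v) / (((m : ℝ) + u) * ((m : ℝ) + v))) := by
  set C := min (min u v) 1 with hCdef
  have hC : 0 < C := lt_min (lt_min hu hv) one_pos
  apply Summable.of_norm
  refine Summable.of_nonneg_of_le (fun m => norm_nonneg _) (fun m => ?_)
    (summable_sq hC |u - v|)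
  have hu' : C * (m + 1) ≤ (m : ℝ) + u := by
    refine le_trans ?_ (real_denom_lower hu m)
    have : C ≤ min u 1 := by
      apply le_min (le_trans (min_le_left _ _) (min_le_left _ _)) (min_le_right _ _)
    nlinarith [Nat.cast_nonneg (α := ℝ) m]
  have hv' : C * (m + 1) ≤ (m : ℝ) + v := by
    have h : min v 1 * (m+1) ≤ (m : ℝ) + v := real_denom_lower hv m
    refine le_trans ?_ h
    have : C ≤ min v 1 := by
      apply le_min (le_trans (min_le_left _ _) (min_le_right _ _)) (min_le_right _ _)
    nlinarith [Nat.cast_nonneg (α := ℝ) m]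
  have hp : 0 < C * (m + 1) := by positivity
  rw [Real.norm_eq_abs, _root_.abs_div, _root_.abs_mul]
  have h1 : |(m : ℝ) + u| = (m : ℝ) + u := _root_.abs_of_pos (by positivity)
  have h2 : |(m : ℝ) + v| = (m : ℝ) + v := _root_.abs_of_pos (by positivity)
  rw [h1, h2]
  gcongr

/-- the series function -/
noncomputable def S (u v : ℝ) : ℝ := ∑' m : ℕ, (u - v) / (((m : ℝ) + u) * ((m : ℝ) + v))

lemma S_rec {u v : ℝ} (hu : 0 < u) (hv : 0 < v) :
    S u v = (u - v) / (u * v) + S (u + 1) (v + 1) := by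
  have h := (real_summable hu hv).tsum_eq_zero_add
  rw [S, h]
  congr 1
  · norm_num
  · rw [S]
    apply tsum_congr
    intro m
    push_cast
    ring_nf






/-- invariance of the defect under shifting both arguments -/
lemma defect_invariant {u v : ℝ} (hu : 0 < u) (hv : 0 < v) (n : ℕ) :
    psiR u - psiR v - S u v = psiR (u + n) - psiR (v + n) - S (u + n) (v + n) := by
  induction n with
  | zero => simp
  | succ n ih =>
    have hun : 0 < u + n := by positivity
    have hvn : 0 < v + n := by positivity
    have h1 : psiR (u + (n + 1 : ℕ)) = psiR (u + n) + 1 / (u + n) := by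
      have := psiR_rec hun; rw [← this]; push_cast; ring_nf
    have h2 : psiR (v + (n + 1 : ℕ)) = psiR (v + n) + 1 / (v + n) := by
      have := psiR_rec hvn; rw [← this]; push_cast; ring_nf
    have h3 : S (u + n) (v + n)
        = ((u + n) - (v + n)) / ((u + n) * (v + n)) + S (u + (n + 1 : ℕ)) (v + (n + 1 : ℕ)) := by
      have := S_rec hun hvn
      convert this using 3 <;> push_cast <;> ring
    rw [ih, h1, h2]
    rw [h3]
    have e1 : 1 / (u + n) - 1 / (v + n) = ((v + n) - (u + n)) / ((u + n) * (v + n)) := by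
      field_simp
    ring_nf
    ring_nf at e1 ⊢
    nlinarith [e1]



lemma tendstoA {u v : ℝ} (hu : 0 < u) (huv : u ≤ v) :
    Tendsto (fun n : ℕ => psiR (u + n) - psiR (v + n)) atTop (𝓝 0) := by
  set k := ⌈v - u⌉₊ with hk
  have hkge : v - u ≤ k := Nat.le_ceil _
  have hbound : ∀ n : ℕ, ‖psiR (u + n) - psiR (v + n)‖ ≤ (k : ℝ) / (u + n) := by
    intro n
    have hun : 0 < u + n := by positivity
    have h1 : psiR (u + n) ≤ psiR (v + n) :=
      psiR_mono hun (by linarith)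
    have h2 : psiR (v + n) ≤ psiR ((u + n) + k) :=
      psiR_mono (by linarith) (by linarith)
    have h3 : psiR ((u + n) + k) ≤ psiR (u + n) + k / (u + n) :=
      psiR_add_nat_le hun k
    rw [Real.norm_eq_abs, _root_.abs_sub_comm, _root_.abs_of_nonneg (by linarith)]
    linarith
  apply squeeze_zero_norm hbound
  have hg : Tendsto (fun n : ℕ => u + (n : ℝ)) atTop atTop :=
    tendsto_atTop_add_const_left _ u tendsto_natCast_atTop_atTop
  simpa using hg.const_div_atTop (k : ℝ)

lemma summable_g {u : ℝ} (hu : 0 < u) (K : ℝ) :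
    Summable (fun m : ℕ => K / (((m : ℝ) + u) * ((m : ℝ) + u))) := by
  have hC : 0 < min u 1 := lt_min hu one_pos
  apply Summable.of_norm
  refine Summable.of_nonneg_of_le (fun m => norm_nonneg _) (fun m => ?_)
    (summable_sq hC |K|)
  have h := real_denom_lower hu m
  have hp : 0 < min u 1 * (m + 1) := by positivity
  rw [Real.norm_eq_abs, _root_.abs_div, _root_.abs_mul]
  have h1 : |(m : ℝ) + u| = (m : ℝ) + u := _root_.abs_of_pos (by positivity)
  rw [h1]
  gcongr

lemma tendstoB {u v : ℝ} (hu : 0 < u) (huv : u ≤ v) :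
    Tendsto (fun n : ℕ => S (u + n) (v + n)) atTop (𝓝 0) := by
  have hv : 0 < v := lt_of_lt_of_le hu huv
  set g : ℕ → ℝ := fun m => (v - u) / (((m : ℝ) + u) * ((m : ℝ) + u)) with hgdef
  have hgsum : Summable g := summable_g hu (v - u)
  have hbound : ∀ n : ℕ, ‖S (u + n) (v + n)‖ ≤ ∑' m : ℕ, g (m + n) := by
    intro n
    have hun : 0 < u + n := by positivity
    have hvn : 0 < v + n := by positivity
    have hsum := real_summable hun hvn
    have h1 : ‖S (u + n) (v + n)‖ ≤ ∑' m : ℕ, ‖(u + n - (v + n)) / (((m : ℝ) + (u + n)) * ((m : ℝ) + (v + n)))‖ :=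
      norm_tsum_le_tsum_norm hsum.norm
    refine h1.trans (hsum.norm.tsum_le_tsum (fun m => ?_) ((summable_nat_add_iff n).mpr hgsum))
    have e1 : u + n - (v + n) = -(v - u) := by ring
    have hd1 : (0:ℝ) < (m : ℝ) + (u + n) := by positivity
    have hd2 : (0:ℝ) < (m : ℝ) + (v + n) := by positivity
    rw [Real.norm_eq_abs, _root_.abs_div, e1, _root_.abs_neg, _root_.abs_of_nonneg (by linarith), _root_.abs_mul,
      _root_.abs_of_pos hd1, _root_.abs_of_pos hd2, hgdef]
    have hc1 : ((m + n : ℕ) : ℝ) + u = (m : ℝ) + (u + n) := by push_cast; ring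
    have hc2 : ((m + n : ℕ) : ℝ) + u ≤ (m : ℝ) + (v + n) := by push_cast; linarith
    simp only [hc1]
    gcongr
  apply squeeze_zero_norm hbound
  exact tendsto_sum_nat_add g

lemma psi_sub_eq_of_le {u v : ℝ} (hu : 0 < u) (huv : u ≤ v) :
    psiR u - psiR v = S u v := by
  have hv : 0 < v := lt_of_lt_of_le hu huv
  have htend : Tendsto (fun n : ℕ => psiR (u + n) - psiR (v + n) - S (u + n) (v + n))
      atTop (𝓝 0) := by
    simpa using (tendstoA hu huv).sub (tendstoB hu huv)
  have hconst : Tendsto (fun _ : ℕ => psiR u - psiR v - S u v) atTop (𝓝 0) := by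
    refine htend.congr fun n => ?_
    exact (defect_invariant hu hv n).symm
  have := tendsto_nhds_unique hconst tendsto_const_nhds
  linarith

lemma psi_sub_eq {u v : ℝ} (hu : 0 < u) (hv : 0 < v) :
    psiR u - psiR v = S u v := by
  rcases le_total u v with h | h
  · exact psi_sub_eq_of_le hu h
  · have h1 := psi_sub_eq_of_le hv h
    have h2 : S u v = -S v u := by
      rw [S, S, ← tsum_neg]
      apply tsum_congr
      intro m
      have hd1 : ((m : ℝ) + u) ≠ 0 := by positivity
      have hd2 : ((m : ℝ) + v) ≠ 0 := by positivity
      field_simp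
      ring
    rw [h2, ← h1]
    ring





noncomputable def psiC (w : ℂ) : ℂ := deriv Complex.Gamma w / Complex.Gamma w
noncomputable def fC (a b : ℝ) (z : ℂ) : ℂ :=
  Complex.Gamma ((a : ℂ) + z) / Complex.Gamma ((b : ℂ) + z)
noncomputable def gC (a b : ℝ) (z : ℂ) : ℂ :=
  ∑' m : ℕ, ((a : ℂ) - (b : ℂ)) / (((m : ℂ) + a + z) * ((m : ℂ) + b + z))

lemma ne_neg_nat {w : ℂ} (h : 0 < w.re) : ∀ m : ℕ, w ≠ -m := by
  intro m hm
  rw [hm] at h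
  simp only [neg_re, natCast_re] at h
  have := Nat.cast_nonneg (α := ℝ) m
  linarith

lemma gammaC_diff {w : ℂ} (h : 0 < w.re) : DifferentiableAt ℂ Complex.Gamma w :=
  Complex.differentiableAt_Gamma _ (ne_neg_nat h)

lemma gammaC_ne {w : ℂ} (h : 0 < w.re) : Complex.Gamma w ≠ 0 :=
  Complex.Gamma_ne_zero_of_re_pos h

lemma hasDerivAt_shift (c : ℝ) {z : ℂ} (h : 0 < ((c : ℂ) + z).re) :
    HasDerivAt (fun w => Complex.Gamma ((c : ℂ) + w)) (deriv Complex.Gamma ((c : ℂ) + z)) z := by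
  have h1 : HasDerivAt (fun w : ℂ => (c : ℂ) + w) 1 z := by
    simpa using (hasDerivAt_id z).const_add (c : ℂ)
  have h2 := (gammaC_diff h).hasDerivAt
  have h3 := h2.comp z h1
  rw [mul_one] at h3
  exact h3

lemma hasDerivAt_fC {a b : ℝ} {z : ℂ} (ha : 0 < ((a : ℂ) + z).re) (hb : 0 < ((b : ℂ) + z).re) :
    HasDerivAt (fC a b) (fC a b z * (psiC ((a : ℂ) + z) - psiC ((b : ℂ) + z))) z := by
  have h := (hasDerivAt_shift a ha).div (hasDerivAt_shift b hb) (gammaC_ne hb)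
  refine h.congr_deriv ?_
  rw [fC, psiC, psiC]
  have h1 := gammaC_ne ha
  have h2 := gammaC_ne hb
  field_simp

lemma psiC_ofReal {y : ℝ} (hy : 0 < y) : psiC (y : ℂ) = ((psiR y : ℝ) : ℂ) := by
  have hd : deriv Complex.Gamma (y : ℂ) = ((deriv Real.Gamma y : ℝ) : ℂ) := by
    have hdC : DifferentiableAt ℂ Complex.Gamma (y : ℂ) := by
      apply gammaC_diff; simpa using hy
    have h1 : HasDerivAt (fun t : ℝ => Complex.Gamma (t : ℂ))
        (deriv Complex.Gamma (y : ℂ)) y := hdC.hasDerivAt.comp_ofReal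
    have hdR : HasDerivAt Real.Gamma (deriv Real.Gamma y) y :=
      (Real.differentiableAt_Gamma fun m =>
        ne_of_gt (by have := Nat.cast_nonneg (α := ℝ) m; linarith)).hasDerivAt
    have h2 : HasDerivAt (fun t : ℝ => ((Real.Gamma t : ℝ) : ℂ))
        ((deriv Real.Gamma y : ℝ) : ℂ) y := hdR.ofReal_comp
    have h3 : (fun t : ℝ => Complex.Gamma (t : ℂ)) = fun t : ℝ => ((Real.Gamma t : ℝ) : ℂ) :=
      funext fun t => Complex.Gamma_ofReal t
    rw [h3] at h1
    exact h1.unique h2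
  rw [psiC, hd, Complex.Gamma_ofReal, psiR]
  push_cast
  ring

variable {a b : ℝ}

lemma re_pos_a (ha : 0 < a) {z : ℂ} (hz : -min a b < z.re) : 0 < ((a : ℂ) + z).re := by
  simp only [add_re, ofReal_re]
  have : min a b ≤ a := min_le_left _ _
  linarith

lemma re_pos_b (hb : 0 < b) {z : ℂ} (hz : -min a b < z.re) : 0 < ((b : ℂ) + z).re := by
  simp only [add_re, ofReal_re]
  have : min a b ≤ b := min_le_right _ _
  linarith

lemma fC_hasDerivAt (ha : 0 < a) (hb : 0 < b) {z : ℂ} (hz : -min a b < z.re) :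
    HasDerivAt (fC a b) (fC a b z * (psiC ((a : ℂ) + z) - psiC ((b : ℂ) + z))) z :=
  hasDerivAt_fC (re_pos_a ha hz) (re_pos_b hb hz)

lemma fC_differentiableOn (ha : 0 < a) (hb : 0 < b) :
    DifferentiableOn ℂ (fC a b) {z : ℂ | -min a b < z.re} :=
  fun z hz => (fC_hasDerivAt ha hb hz).differentiableAt.differentiableWithinAt

lemma isOpen_halfplane (c : ℝ) : IsOpen {z : ℂ | c < z.re} :=
  isOpen_lt continuous_const Complex.continuous_re

lemma gC_differentiableOn (ha : 0 < a) (hb : 0 < b) {ε : ℝ} (hε : 0 < ε) :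
    DifferentiableOn ℂ (gC a b) {z : ℂ | ε - min a b < z.re} := by
  set V := {z : ℂ | ε - min a b < z.re}
  have hVopen : IsOpen V := isOpen_halfplane _
  have hmina : min a b ≤ a := min_le_left _ _
  have hminb : min a b ≤ b := min_le_right _ _
  have hrea : ∀ w ∈ V, ε ≤ ((a : ℂ) + w).re := by
    intro w hw
    simp only [add_re, ofReal_re]
    have := hw
    simp only [V, mem_setOf_eq] at this
    linarith
  have hreb : ∀ w ∈ V, ε ≤ ((b : ℂ) + w).re := by
    intro w hw
    simp only [add_re, ofReal_re]
    have := hw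
    simp only [V, mem_setOf_eq] at this
    linarith
  have key : DifferentiableOn ℂ
      (fun w : ℂ => ∑' m : ℕ, ((a : ℂ) - (b : ℂ)) / (((m : ℂ) + a + w) * ((m : ℂ) + b + w))) V := by
    apply differentiableOn_tsum_of_summable_norm
      (u := fun m : ℕ => ‖(a : ℂ) - (b : ℂ)‖ / ((min ε 1 * (m + 1)) * (min ε 1 * (m + 1))))
    · exact summable_sq (lt_min hε one_pos) _
    · intro m
      apply DifferentiableOn.div (differentiableOn_const _)
      · apply DifferentiableOn.mul <;>
          exact (differentiable_const _ |>.add differentiable_id).differentiableOn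
      · intro w hw
        apply mul_ne_zero
        · have h1 := norm_nat_add_lower hε (hrea w hw) m
          have hp : 0 < min ε 1 * (m + 1) := by positivity
          intro hzero
          rw [← add_assoc, hzero] at h1
          simp at h1
          nlinarith
        · have h1 := norm_nat_add_lower hε (hreb w hw) m
          have hp : 0 < min ε 1 * (m + 1) := by positivity
          intro hzero
          rw [← add_assoc, hzero] at h1
          simp at h1
          nlinarith
    · exact hVopen
    · intro m w hw
      rw [norm_div, norm_mul]
      have h1 := norm_nat_add_lower hε (hrea w hw) m
      have h2 := norm_nat_add_lower hε (hreb w hw) m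
      simp only [← add_assoc] at h1 h2
      have hp : 0 < min ε 1 * (m + 1) := by positivity
      gcongr
  exact key

lemma gC_analyticOnNhd (ha : 0 < a) (hb : 0 < b) :
    AnalyticOnNhd ℂ (gC a b) {z : ℂ | -min a b < z.re} := by
  intro z hz
  simp only [mem_setOf_eq] at hz
  set ε := (z.re + min a b) / 2 with hεdef
  have hε : 0 < ε := by simp only [hεdef]; linarith
  have hzV : z ∈ {w : ℂ | ε - min a b < w.re} := by
    simp only [mem_setOf_eq, hεdef]; linarith
  exact ((gC_differentiableOn ha hb hε).analyticOnNhd (isOpen_halfplane _)) z hzV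

lemma fC_analyticOnNhd (ha : 0 < a) (hb : 0 < b) :
    AnalyticOnNhd ℂ (fC a b) {z : ℂ | -min a b < z.re} :=
  (fC_differentiableOn ha hb).analyticOnNhd (isOpen_halfplane _)

lemma deriv_fC_real_pt (ha : 0 < a) (hb : 0 < b) {x : ℝ} (hx : 0 < x) :
    deriv (fC a b) (x : ℂ) = fC a b (x : ℂ) * gC a b (x : ℂ) := by
  have hmem : -min a b < ((x : ℂ)).re := by
    simp only [ofReal_re]
    have : 0 < min a b := lt_min ha hb
    linarith
  have hd := fC_hasDerivAt ha hb hmem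
  rw [hd.deriv]
  congr 1
  have hax : (a : ℂ) + (x : ℂ) = ((a + x : ℝ) : ℂ) := by push_cast; ring
  have hbx : (b : ℂ) + (x : ℂ) = ((b + x : ℝ) : ℂ) := by push_cast; ring
  rw [hax, hbx, psiC_ofReal (by linarith), psiC_ofReal (by linarith), ← Complex.ofReal_sub,
    psi_sub_eq (by linarith) (by linarith)]
  rw [S, gC, Complex.ofReal_tsum]
  apply tsum_congr
  intro m
  push_cast
  have e1 : (a : ℂ) + x - (b + x) = a - b := by ring
  rw [div_eq_div_iff]
  · ring
  · intro hzero
    have := congrArg Complex.re hzero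
    simp only [mul_re, add_re, ofReal_re, natCast_re, add_im, ofReal_im, natCast_im, zero_re,
      mul_im] at this
    nlinarith [Nat.cast_nonneg (α := ℝ) m]
  · intro hzero
    have := congrArg Complex.re hzero
    simp only [mul_re, add_re, ofReal_re, natCast_re, add_im, ofReal_im, natCast_im, zero_re,
      mul_im] at this
    nlinarith [Nat.cast_nonneg (α := ℝ) m]

lemma deriv_fC_eq (ha : 0 < a) (hb : 0 < b) :
    EqOn (deriv (fC a b)) (fun z => fC a b z * gC a b z) {z : ℂ | -min a b < z.re} := by
  have hU : IsPreconnected {z : ℂ | -min a b < z.re} :=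
    (convex_halfSpace_re_gt _).isPreconnected
  have h1mem : (1 : ℂ) ∈ {z : ℂ | -min a b < z.re} := by
    simp only [mem_setOf_eq, one_re]
    have := lt_min ha hb
    linarith
  have hderiv_an : AnalyticOnNhd ℂ (deriv (fC a b)) {z : ℂ | -min a b < z.re} :=
    (fC_analyticOnNhd ha hb).deriv
  have hF_an : AnalyticOnNhd ℂ (fun z => fC a b z * gC a b z) {z : ℂ | -min a b < z.re} :=
    (fC_analyticOnNhd ha hb).mul (gC_analyticOnNhd ha hb)
  apply hderiv_an.eqOn_of_preconnected_of_frequently_eq hF_an hU h1mem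
  have htend : Tendsto (fun n : ℕ => (((1 + 1 / (n + 1) : ℝ)) : ℂ)) atTop (𝓝[≠] (1 : ℂ)) := by
    rw [tendsto_nhdsWithin_iff]
    constructor
    · have h0 : Tendsto (fun n : ℕ => (1 + 1 / (n + 1) : ℝ)) atTop (𝓝 1) := by
        have := tendsto_one_div_add_atTop_nhds_zero_nat (𝕜 := ℝ)
        simpa using (tendsto_const_nhds (x := (1:ℝ))).add this
      have := (Complex.continuous_ofReal.tendsto 1).comp h0
      simpa [Function.comp_def] using this
    · filter_upwards with n
      simp only [mem_compl_iff, mem_singleton_iff]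
      intro h
      have h2 : (1 + 1 / (n + 1) : ℝ) = 1 := by exact_mod_cast h
      have h3 : (0:ℝ) < 1 / (n + 1) := by positivity
      linarith
  apply htend.frequently
  apply Frequently.of_forall
  intro n
  exact deriv_fC_real_pt ha hb (by positivity)

lemma fC_hasDerivAt_main (ha : 0 < a) (hb : 0 < b) {z : ℂ} (hz : -min a b < z.re) :
    HasDerivAt (fC a b) (fC a b z * gC a b z) z := by
  have hd := fC_hasDerivAt ha hb hz
  have key : deriv (fC a b) z = fC a b z * gC a b z := deriv_fC_eq ha hb hz
  rw [hd.deriv] at key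
  exact key ▸ hd



end GammaRatioAux

/-- For real `a, b > 0`, the function `s(ξ) = Γ(a + iξ)/Γ(b + iξ)` is
differentiable on `ℝ`, the series `Σ_{m≥0} (a - b)/((m + a + iξ)(m + b + iξ))` converges
absolutely for every `ξ`, and
`s′(ξ) = s(ξ) · i · Σ_{m≥0} (a - b)/((m + a + iξ)(m + b + iξ))`. -/
theorem gamma_ratio_deriv (a b : ℝ) (ha : 0 < a) (hb : 0 < b)
    (s : ℝ → ℂ)
    (hs : ∀ ξ : ℝ, s ξ =
      Complex.Gamma ((a : ℂ) + ξ * Complex.I) / Complex.Gamma ((b : ℂ) + ξ * Complex.I)) :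
    (∀ ξ : ℝ, DifferentiableAt ℝ s ξ) ∧
    (∀ ξ : ℝ, Summable (fun m : ℕ =>
      ‖((a : ℂ) - (b : ℂ)) /
        (((m : ℂ) + a + ξ * Complex.I) * ((m : ℂ) + b + ξ * Complex.I))‖)) ∧
    (∀ ξ : ℝ, deriv s ξ =
      s ξ * (Complex.I * ∑' m : ℕ, ((a : ℂ) - (b : ℂ)) /
        (((m : ℂ) + a + ξ * Complex.I) * ((m : ℂ) + b + ξ * Complex.I)))) := by
  classical
  have hsfun : s = fun ξ : ℝ => GammaRatioAux.fC a b ((ξ : ℂ) * Complex.I) := by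
    funext ξ
    rw [hs ξ]
    rfl
  have hmem : ∀ ξ : ℝ, -min a b < (((ξ : ℂ) * Complex.I)).re := by
    intro ξ
    have : ((ξ : ℂ) * Complex.I).re = 0 := by simp
    rw [this]
    have := lt_min ha hb
    linarith
  have hsd : ∀ ξ : ℝ, HasDerivAt s
      (Complex.I • (GammaRatioAux.fC a b ((ξ : ℂ) * Complex.I) *
        GammaRatioAux.gC a b ((ξ : ℂ) * Complex.I))) ξ := by
    intro ξ
    have hinner : HasDerivAt (fun t : ℝ => (t : ℂ) * Complex.I) Complex.I ξ := by
      simpa using ((hasDerivAt_id ξ).ofReal_comp.mul_const Complex.I)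
    have houter := GammaRatioAux.fC_hasDerivAt_main ha hb (hmem ξ)
    have := houter.scomp ξ hinner
    simp only [smul_eq_mul] at this ⊢
    rw [hsfun]
    exact this
  refine ⟨fun ξ => (hsd ξ).differentiableAt, fun ξ => ?_, fun ξ => ?_⟩
  · have h1 : (0:ℝ) < min a b := lt_min ha hb
    have hsum := GammaRatioAux.summable_norm_term (w₁ := (a : ℂ) + ξ * Complex.I)
      (w₂ := (b : ℂ) + ξ * Complex.I) (ε := min a b) h1
      (by simp [min_le_left a b]) (by simp [min_le_right a b])
    refine hsum.congr fun m => ?_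
    have e : ((a:ℂ) + ξ * Complex.I - ((b:ℂ) + ξ * Complex.I)) /
          (((m:ℂ) + ((a:ℂ) + ξ * Complex.I)) * ((m:ℂ) + ((b:ℂ) + ξ * Complex.I)))
        = ((a:ℂ) - (b:ℂ)) / (((m:ℂ) + a + ξ * Complex.I) * ((m:ℂ) + b + ξ * Complex.I)) := by
      congr 1
      · ring
      · ring
    rw [e]
  · rw [(hsd ξ).deriv, hs ξ]
    rw [GammaRatioAux.fC, GammaRatioAux.gC]
    simp only [smul_eq_mul]
    ring
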